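/- Let G be a graph admitting a tree decomposition in which any two vertices sharing a bag are at graph distance at most k. Let A ⊆ V(G) be a set such that G[A] is connected. Then every shortest path in G between two vertices a, b ∈ A is contained in the set of vertices at distance at most 3k/2 from A. -/

import Mathlib

/-- A tree decomposition of a graph `G`. -/
structure TreeDecomp {V : Type*} (G : SimpleGraph V) (ι : Type*) where
  T : SimpleGraph ι
  isTree : T.IsTree
  bag : ι → Set V
  bag_nonempty : ∀ v : V, ∃ t, v ∈ bag t
  bag_connected : ∀ v : V, (T.induce {t | v ∈ bag t}).Connected
  bag_edge : ∀ u v : V, G.Adj u v → ∃ t, u ∈ bag t ∧ v ∈ bag t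

open SimpleGraph

/-- A walk in an induced subgraph yields a walk in the ambient graph whose support
stays in the set. -/
lemma stmt3_exists_walk_in_set {V : Type*} {G : SimpleGraph V} {A : Set V} {x y : A}
    (h : (G.induce A).Reachable x y) :
    ∃ q : G.Walk x y, ∀ u ∈ q.support, u ∈ A := by
  obtain ⟨w⟩ := h
  refine ⟨w.map ⟨Subtype.val, fun h => h⟩, ?_⟩
  intro u hu
  rw [SimpleGraph.Walk.support_map] at hu
  obtain ⟨u', _, rfl⟩ := List.mem_map.mp hu
  exact u'.2

/-- If an edge of `T` crosses the deleted edge's reachability classes, it is that edge. -/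
lemma stmt3_aux_edge {ι : Type*} {T : SimpleGraph ι} {ts t0 : ι}
    (hbr : ¬ (T.deleteEdges {s(ts, t0)}).Reachable t0 ts)
    {t t' : ι} (hadj : T.Adj t t')
    (hQ : (T.deleteEdges {s(ts, t0)}).Reachable t0 t)
    (hQ' : ¬ (T.deleteEdges {s(ts, t0)}).Reachable t0 t') :
    t = t0 ∧ t' = ts := by
  by_cases he : s(t, t') = s(ts, t0)
  · rcases Sym2.eq_iff.mp he with ⟨rfl, rfl⟩ | ⟨rfl, rfl⟩
    · exact absurd hQ hbr
    · exact ⟨rfl, rfl⟩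
  · exfalso
    apply hQ'
    refine hQ.trans ⟨SimpleGraph.Walk.cons ?_ SimpleGraph.Walk.nil⟩
    simp only [SimpleGraph.deleteEdges_adj, Set.mem_singleton_iff]
    exact ⟨hadj, he⟩

/-- Along a walk in `T` all of whose bags contain `u`, crossing the deleted edge forces
`u` to lie in both endpoint bags. -/
lemma stmt3_aux_walk {V ι : Type*} {G : SimpleGraph V} (td : TreeDecomp G ι) {ts t0 : ι}
    (hbr : ¬ (td.T.deleteEdges {s(ts, t0)}).Reachable t0 ts) {u : V} :
    ∀ {t1 t2 : ι} (W : td.T.Walk t1 t2),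
      (∀ t ∈ W.support, u ∈ td.bag t) →
      (td.T.deleteEdges {s(ts, t0)}).Reachable t0 t1 →
      ¬ (td.T.deleteEdges {s(ts, t0)}).Reachable t0 t2 →
      u ∈ td.bag ts ∧ u ∈ td.bag t0 := by
  intro t1 t2 W
  induction W with
  | nil => intro _ h1 h2; exact absurd h1 h2
  | @cons c m d hadj W' ih =>
    intro hsup h1 h2
    by_cases hq : (td.T.deleteEdges {s(ts, t0)}).Reachable t0 m
    · exact ih (fun t ht => hsup t (by simp [ht])) hq h2
    · obtain ⟨hc, hm⟩ := stmt3_aux_edge hbr hadj h1 hq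
      constructor
      · have := hsup m (by simp); rwa [hm] at this
      · have := hsup c (by simp); rwa [hc] at this

/-- If `u` has a bag on each side of the deleted edge, then `u` is in both endpoint bags. -/
lemma stmt3_aux_both {V ι : Type*} {G : SimpleGraph V} (td : TreeDecomp G ι) {ts t0 : ι}
    (hbr : ¬ (td.T.deleteEdges {s(ts, t0)}).Reachable t0 ts) {u : V} {t1 t2 : ι}
    (h1 : u ∈ td.bag t1) (hQ1 : (td.T.deleteEdges {s(ts, t0)}).Reachable t0 t1)
    (h2 : u ∈ td.bag t2) (hQ2 : ¬ (td.T.deleteEdges {s(ts, t0)}).Reachable t0 t2) :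
    u ∈ td.bag ts ∧ u ∈ td.bag t0 := by
  obtain ⟨W, hW⟩ := stmt3_exists_walk_in_set
    ((td.bag_connected u).preconnected (⟨t1, h1⟩ : {t | u ∈ td.bag t}) ⟨t2, h2⟩)
  exact stmt3_aux_walk td hbr W hW hQ1 hQ2

/-- Finding the first crossing edge out of the region `prop` along a path. -/
lemma stmt3_first_cross {ι : Type*} {T : SimpleGraph ι} (prop : ι → Prop) {tv : ι} :
    ∀ {ta : ι} (P : T.Walk ta tv), P.IsPath → prop ta → ¬ prop tv →
      ∃ ts t0, T.Adj ts t0 ∧ prop ts ∧ ¬ prop t0 ∧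
        (T.deleteEdges {s(ts, t0)}).Reachable t0 tv := by
  intro ta P
  induction P with
  | nil => intro _ h1 h2; exact absurd h1 h2
  | @cons c m d hadj P' ih =>
    intro hpath hc hd
    by_cases hm : prop m
    · exact ih hpath.of_cons hm hd
    · refine ⟨c, m, hadj, hc, hm, ?_⟩
      have hnot : c ∉ P'.support := (SimpleGraph.Walk.cons_isPath_iff _ _).mp hpath |>.2
      refine SimpleGraph.Walk.reachable (P'.transfer _ ?_)
      intro e he
      have heT : e ∈ T.edgeSet := P'.edges_subset_edgeSet he
      rw [SimpleGraph.edgeSet_deleteEdges]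
      refine ⟨heT, ?_⟩
      intro hee
      rw [Set.mem_singleton_iff] at hee
      subst hee
      exact hnot (P'.fst_mem_support_of_mem_edges he)

theorem stmt3 {V ι : Type*} [Fintype V] [Fintype ι] (G : SimpleGraph V) (hG : G.Connected)
    (td : TreeDecomp G ι) (k : ℕ)
    (hk : ∀ t, ∀ u ∈ td.bag t, ∀ v ∈ td.bag t, G.dist u v ≤ k)
    (A : Set V) (hA : (G.induce A).Connected)
    (a b : V) (ha : a ∈ A) (hb : b ∈ A) (p : G.Walk a b) (hp : p.length = G.dist a b) :
    ∀ v ∈ p.support, ∃ w ∈ A, 2 * G.dist w v ≤ 3 * k := by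
  classical
  intro v hv
  obtain ⟨tv, hvtv⟩ := td.bag_nonempty v
  by_cases hprop : ∃ w ∈ A, w ∈ td.bag tv
  · obtain ⟨w, hwA, hwtv⟩ := hprop
    have := hk tv w hwtv v hvtv
    exact ⟨w, hwA, by omega⟩
  · obtain ⟨ta, hata⟩ := td.bag_nonempty a
    obtain ⟨W0⟩ := td.isTree.isConnected.preconnected ta tv
    obtain ⟨ts, t0, hadj, hpts, hpt0, hreach⟩ :=
      stmt3_first_cross (fun t => ∃ w ∈ A, w ∈ td.bag t) W0.toPath.1 W0.toPath.2
        ⟨a, ha, hata⟩ hprop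
    obtain ⟨w, hwA, hwts⟩ := hpts
    -- the deleted edge is a bridge of the tree
    have hbridge := isAcyclic_iff_forall_adj_isBridge.mp td.isTree.IsAcyclic hadj
    have hbr : ¬ (td.T.deleteEdges {s(ts, t0)}).Reachable t0 ts := fun h => hbridge h.symm
    have ht0A : ∀ u ∈ A, u ∉ td.bag t0 := fun u hu hbag => hpt0 ⟨u, hu, hbag⟩
    -- the "A-side" predicate
    set Q : ι → Prop := fun t => (td.T.deleteEdges {s(ts, t0)}).Reachable t0 t with hQdef
    have hLw : ∀ t, w ∈ td.bag t → ¬ Q t := by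
      intro t hwt hQt
      exact ht0A w hwA (stmt3_aux_both td hbr hwt hQt hwts hbr).2
    -- all vertices of A are on the `ts` side
    have haux_A : ∀ {c d : V} (W : G.Walk c d), (∀ x ∈ W.support, x ∈ A) →
        (∀ t, c ∈ td.bag t → ¬ Q t) → (∀ t, d ∈ td.bag t → ¬ Q t) := by
      intro c d W
      induction W with
      | nil => intro _ h; exact h
      | @cons c m d hadjcm W' ih =>
        intro hsup hLc
        refine ih (fun x hx => hsup x (by simp [hx])) ?_
        intro t hmt hQt
        obtain ⟨t', hct', hmt'⟩ := td.bag_edge c m hadjcm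
        have := (stmt3_aux_both td hbr hmt hQt hmt' (hLc t' hct')).2
        exact ht0A m (hsup m (by simp)) this
    have hAL : ∀ u ∈ A, ∀ t, u ∈ td.bag t → ¬ Q t := by
      intro u hu
      obtain ⟨q, hq⟩ := stmt3_exists_walk_in_set (hA.preconnected (⟨w, hwA⟩ : A) ⟨u, hu⟩)
      exact haux_A q hq hLw
    have hnLv : ¬ ∀ t, v ∈ td.bag t → ¬ Q t := fun h => h tv hvtv hreach
    -- crossing lemma
    have hcross : ∀ {c d : V} (W : G.Walk c d), (∀ t, c ∈ td.bag t → ¬ Q t) →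
        ¬ (∀ t, d ∈ td.bag t → ¬ Q t) →
        ∃ x ∈ W.support, x ∈ td.bag ts ∧ x ∈ td.bag t0 := by
      intro c d W
      induction W with
      | nil => intro h hn; exact absurd h hn
      | @cons c m d hadjcm W' ih =>
        intro hLc hnLd
        by_cases hLm : ∀ t, m ∈ td.bag t → ¬ Q t
        · obtain ⟨x, hx1, hx2⟩ := ih hLm hnLd
          exact ⟨x, by simp [hx1], hx2⟩
        · push_neg at hLm
          obtain ⟨t1, hmt1, hQt1⟩ := hLm
          obtain ⟨t', hct', hmt'⟩ := td.bag_edge c m hadjcm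
          exact ⟨m, by simp, stmt3_aux_both td hbr hmt1 hQt1 hmt' (hLc t' hct')⟩
    -- apply to the two halves of the geodesic
    set p1 := p.takeUntil v hv with hp1
    set p2 := p.dropUntil v hv with hp2
    obtain ⟨x, hxp1, hxts, hxt0⟩ := hcross p1 (hAL a ha) hnLv
    obtain ⟨y, hyp2r, hyts, hyt0⟩ := hcross p2.reverse (hAL b hb) hnLv
    have hyp2 : y ∈ p2.support := by
      rwa [SimpleGraph.Walk.support_reverse, List.mem_reverse] at hyp2r
    -- length bookkeeping
    have hsplit : p1.length + p2.length = p.length := by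
      rw [← SimpleGraph.Walk.length_append, SimpleGraph.Walk.take_spec]
    have hsplit1 : (p1.takeUntil x hxp1).length + (p1.dropUntil x hxp1).length = p1.length := by
      rw [← SimpleGraph.Walk.length_append, SimpleGraph.Walk.take_spec]
    have hsplit2 : (p2.takeUntil y hyp2).length + (p2.dropUntil y hyp2).length = p2.length := by
      rw [← SimpleGraph.Walk.length_append, SimpleGraph.Walk.take_spec]
    have d1 : G.dist a x ≤ (p1.takeUntil x hxp1).length := SimpleGraph.dist_le _
    have d2 : G.dist x v ≤ (p1.dropUntil x hxp1).length := SimpleGraph.dist_le _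
    have d3 : G.dist v y ≤ (p2.takeUntil y hyp2).length := SimpleGraph.dist_le _
    have d4 : G.dist y b ≤ (p2.dropUntil y hyp2).length := SimpleGraph.dist_le _
    have tri1 : G.dist a b ≤ G.dist a x + G.dist x b := hG.dist_triangle
    have tri2 : G.dist x b ≤ G.dist x y + G.dist y b := hG.dist_triangle
    have hxy : G.dist x y ≤ k := hk ts x hxts y hyts
    have hwx : G.dist w x ≤ k := hk ts w hwts x hxts
    have hwy : G.dist w y ≤ k := hk ts w hwts y hyts
    have twv1 : G.dist w v ≤ G.dist w x + G.dist x v := hG.dist_triangle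
    have twv2 : G.dist w v ≤ G.dist w y + G.dist y v := hG.dist_triangle
    have hcomm : G.dist y v = G.dist v y := SimpleGraph.dist_comm
    exact ⟨w, hwA, by omega⟩
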